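/- Let X be a δ-hyperbolic graph, let a, x be vertices, and let α = 2δ. Then every vertex v lying on some geodesic between a and x belongs to the set U_{2δ}[a,x] of points on 2δ-conical-geodesics between x and a; in particular, for each 0 ≤ ρ ≤ d(a,x), the slice of U_{2δ}[a,x] at distance ρ from a is non-empty. -/

import Mathlib

/-- A graph: vertices, oriented edges, origin/terminus maps, and a
fixed-point-free edge-reversing involution. -/
structure MGraph where
  V : Type
  E : Type
  o : E → V
  t : E → V
  rev : E → E
  rev_o : ∀ e, o (rev e) = t e
  rev_t : ∀ e, t (rev e) = o e
  rev_rev : ∀ e, rev (rev e) = e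
  rev_ne : ∀ e, rev e ≠ e

namespace MGraph

variable (X : MGraph)

/-- A walk from `x` to `y` given by a list of consecutive edges. -/
def IsWalk : List X.E → X.V → X.V → Prop
  | [], x, y => x = y
  | e :: es, x, y => X.o e = x ∧ IsWalk es (X.t e) y

/-- The vertices visited by a walk starting at `x`. -/
def walkVerts : X.V → List X.E → List X.V
  | x, [] => [x]
  | x, e :: es => x :: walkVerts (X.t e) es

/-- The graph metric (length of each edge is 1), valued in `ℕ∞`. -/
noncomputable def dist (x y : X.V) : ℕ∞ :=
  sInf {n : ℕ∞ | ∃ es, X.IsWalk es x y ∧ (es.length : ℕ∞) = n}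

/-- The distance from `x` to `y` in the graph with the vertex `v` removed. -/
noncomputable def delDist (v x y : X.V) : ℕ∞ :=
  sInf {n : ℕ∞ | ∃ es, X.IsWalk es x y ∧ v ∉ X.walkVerts x es ∧ (es.length : ℕ∞) = n}

/-- The angle at `v = t e1 = o e2` between two edges `e1, e2`: the distance
from `o e1` to `t e2` in the graph with the vertex `t e1` removed. -/
noncomputable def angle (e1 e2 : X.E) : ℕ∞ :=
  X.delDist (X.t e1) (X.o e1) (X.t e2)

/-- A geodesic is a walk whose length realizes the distance. -/
def IsGeodesic (es : List X.E) (x y : X.V) : Prop :=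
  X.IsWalk es x y ∧ (es.length : ℕ∞) = X.dist x y

/-- `∠_c(x1,x2) > θ` : there are edges `e1, e2` with `t e1 = o e2 = c`, each
lying on a geodesic between `c` and `x_i`, making an angle `> θ` at `c`. -/
def AngleGT (c x1 x2 : X.V) (θ : ℕ∞) : Prop :=
  ∃ (e1 e2 : X.E) (es1 es2 : List X.E), X.t e1 = c ∧ X.o e2 = c ∧
    X.IsGeodesic (X.rev e1 :: es1) c x1 ∧ X.IsGeodesic (e2 :: es2) c x2 ∧
    θ < X.angle e1 e2

/-- All pairs of consecutive edges of a walk make an angle at most `θ`. -/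
def AngleBounded (θ : ℕ∞) : List X.E → Prop
  | [] => True
  | [_] => True
  | e :: e' :: es => X.angle e e' ≤ θ ∧ AngleBounded θ (e' :: es)

/-- `v` is a vertex of the cone of parameter `θ` around the oriented edge `e`:
it lies on a path starting at `o e` by the edge `e`, of length at most `θ`,
whose consecutive edges make angles at most `θ`. -/
def InConeV (θ : ℕ∞) (e : X.E) (v : X.V) : Prop :=
  ∃ (es : List X.E) (y : X.V), X.IsWalk (e :: es) (X.o e) y ∧
    ((e :: es).length : ℕ∞) ≤ θ ∧ X.AngleBounded θ (e :: es) ∧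
    v ∈ X.walkVerts (X.o e) (e :: es)

/-- `ε` is an edge of the cone of parameter `θ` around the oriented edge `e`. -/
def InConeE (θ : ℕ∞) (e ε : X.E) : Prop :=
  ∃ (es : List X.E) (y : X.V), X.IsWalk (e :: es) (X.o e) y ∧
    ((e :: es).length : ℕ∞) ≤ θ ∧ X.AngleBounded θ (e :: es) ∧
    (ε ∈ e :: es ∨ X.rev ε ∈ e :: es)

/-- A graph is fine if for each edge `e` and each `L`, only finitely many
edges arrive at `o e` making an angle at most `L` with `e`. -/
def Fine : Prop :=
  ∀ (e : X.E) (L : ℕ), {e' : X.E | X.t e' = X.o e ∧ X.angle e' e ≤ (L : ℕ∞)}.Finite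

/-- δ-hyperbolicity: geodesic triangles are δ-thin. -/
def Hyperbolic (δ : ℕ) : Prop :=
  ∀ (a b c : X.V) (p q r : List X.E),
    X.IsGeodesic p a b → X.IsGeodesic q b c → X.IsGeodesic r a c →
    ∀ v ∈ X.walkVerts a p, ∃ w, (w ∈ X.walkVerts b q ∨ w ∈ X.walkVerts a r) ∧
      X.dist v w ≤ (δ : ℕ∞)

/-- The four point inequality form of δ-hyperbolicity. -/
def FourPoint (δ : ℕ) : Prop :=
  ∀ a x y y' : X.V,
    X.dist a x + X.dist y y' ≤
      max (X.dist a y + X.dist y' x) (X.dist a y' + X.dist y x) + (δ : ℕ∞)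

/-- Connectedness. -/
def Connected : Prop := ∀ x y : X.V, ∃ es, X.IsWalk es x y

/-- `t` is on an `α`-geodesic between `x` and `a`. -/
def OnAlphaGeod (α : ℕ∞) (t x a : X.V) : Prop :=
  X.dist x t + X.dist t a ≤ X.dist x a + α

/-- The set `𝓔_{a,x}(ρ)` of edges at distance `ρ` from `a` lying on
geodesics between `a` and `x`. -/
def GeodEdgeAt (a x : X.V) (ρ : ℕ∞) (e : X.E) : Prop :=
  X.dist a (X.o e) = ρ ∧ ∃ es, (X.IsGeodesic es a x ∨ X.IsGeodesic es x a) ∧ e ∈ es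

/-- The set `U_α[a,x]` of points on `α`-conical-geodesics between `x` and `a`. -/
def ConicalSet (α : ℕ) (a x : X.V) : Set X.V :=
  {t | X.OnAlphaGeod (α : ℕ∞) t x a ∧ X.dist a t ≤ X.dist a x ∧
       ∀ e, X.GeodEdgeAt a x (X.dist a t) e → X.InConeV ((40 * α : ℕ) : ℕ∞) e t}

variable {X}

def wrev (es : List X.E) : List X.E := (es.map X.rev).reverse

def vAt (x : X.V) (es : List X.E) (i : ℕ) : X.V := (X.walkVerts x es).getD i x

@[simp] lemma walkVerts_nil (x : X.V) : X.walkVerts x [] = [x] := rfl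

@[simp] lemma walkVerts_cons (x : X.V) (e : X.E) (es : List X.E) :
    X.walkVerts x (e :: es) = x :: X.walkVerts (X.t e) es := rfl

@[simp] lemma length_walkVerts (x : X.V) (es : List X.E) :
    (X.walkVerts x es).length = es.length + 1 := by
  induction es generalizing x with
  | nil => rfl
  | cons e es ih => simp [ih]

@[simp] lemma vAt_zero (x : X.V) (es : List X.E) : vAt x es 0 = x := by
  cases es <;> rfl

lemma vAt_cons (x : X.V) (e : X.E) (es : List X.E) {i : ℕ} (hi : i ≤ es.length) :
    vAt x (e :: es) (i + 1) = vAt (X.t e) es i := by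
  have h1 : i < (X.walkVerts (X.t e) es).length := by simp; omega
  simp only [vAt, walkVerts_cons, List.getD_cons_succ]
  rw [List.getD_eq_getElem _ _ h1, List.getD_eq_getElem _ _ h1]

lemma self_mem_walkVerts (x : X.V) (es : List X.E) : x ∈ X.walkVerts x es := by
  cases es <;> simp

lemma isWalk_nil (x : X.V) : X.IsWalk [] x x := rfl

lemma isWalk_append {es fs : List X.E} {x y z : X.V} (h1 : X.IsWalk es x y)
    (h2 : X.IsWalk fs y z) : X.IsWalk (es ++ fs) x z := by
  induction es generalizing x with
  | nil => cases h1; exact h2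
  | cons e es ih => exact ⟨h1.1, ih h1.2⟩

lemma mem_walkVerts_append {es fs : List X.E} {x y : X.V} (h1 : X.IsWalk es x y) (w : X.V) :
    w ∈ X.walkVerts x (es ++ fs) ↔ w ∈ X.walkVerts x es ∨ w ∈ X.walkVerts y fs := by
  induction es generalizing x with
  | nil =>
      cases h1
      simp only [List.nil_append, walkVerts_nil, List.mem_singleton]
      constructor
      · exact fun h => Or.inr h
      · rintro (rfl | h)
        · exact self_mem_walkVerts _ _
        · exact h
  | cons e es ih =>
      simp only [List.cons_append, walkVerts_cons, List.mem_cons, ih h1.2, or_assoc]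

lemma end_mem_walkVerts {es : List X.E} {x y : X.V} (h : X.IsWalk es x y) :
    y ∈ X.walkVerts x es := by
  induction es generalizing x with
  | nil => cases h; simp
  | cons e es ih => exact List.mem_cons_of_mem _ (ih h.2)

lemma vAt_last {es : List X.E} {x y : X.V} (h : X.IsWalk es x y) :
    vAt x es es.length = y := by
  induction es generalizing x with
  | nil => cases h; rfl
  | cons e es ih => rw [List.length_cons, vAt_cons _ _ _ le_rfl]; exact ih h.2

lemma mem_walkVerts_iff {es : List X.E} {x : X.V} (w : X.V) :
    w ∈ X.walkVerts x es ↔ ∃ i, i ≤ es.length ∧ w = vAt x es i := by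
  induction es generalizing x with
  | nil => simp [vAt]
    
  | cons e es ih =>
      simp only [walkVerts_cons, List.mem_cons, ih]
      constructor
      · rintro (rfl | ⟨i, hi, rfl⟩)
        · exact ⟨0, by simp, by simp⟩
        · exact ⟨i + 1, by simpa using hi, (vAt_cons _ _ _ hi).symm⟩
      · rintro ⟨i, hi, rfl⟩
        cases i with
        | zero => left; simp
        | succ j => right; exact ⟨j, by simpa using hi, vAt_cons _ _ _ (by simpa using hi)⟩

lemma walk_getElem_o {es : List X.E} {x y : X.V} (h : X.IsWalk es x y) {i : ℕ}
    (hi : i < es.length) : X.o es[i] = vAt x es i := by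
  induction es generalizing x i with
  | nil => simp at hi
  | cons e es ih =>
      cases i with
      | zero => simpa using h.1.symm ▸ h.1
      | succ j =>
          have hj : j < es.length := by simpa using hi
          rw [vAt_cons _ _ _ (by omega)]
          simpa using ih h.2 hj

lemma walk_getElem_t {es : List X.E} {x y : X.V} (h : X.IsWalk es x y) {i : ℕ}
    (hi : i < es.length) : X.t es[i] = vAt x es (i + 1) := by
  induction es generalizing x i with
  | nil => simp at hi
  | cons e es ih =>
      cases i with
      | zero => rw [vAt_cons _ _ _ (by omega)]; simp
      | succ j =>
          have hj : j < es.length := by simpa using hi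
          rw [vAt_cons _ _ _ (by omega)]
          simpa using ih h.2 hj

/-! ### take/drop -/

lemma walkVerts_take (x : X.V) (es : List X.E) (n : ℕ) :
    X.walkVerts x (es.take n) = (X.walkVerts x es).take (n + 1) := by
  induction es generalizing x n with
  | nil => simp
  | cons e es ih =>
      cases n with
      | zero => simp
      | succ m => simp [ih]

lemma walk_take {es : List X.E} {x y : X.V} (h : X.IsWalk es x y) (n : ℕ) :
    X.IsWalk (es.take n) x (vAt x es (min n es.length)) := by
  induction es generalizing x n with
  | nil => cases h; cases n <;> exact rfl
  | cons e es ih =>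
      cases n with
      | zero => exact rfl
      | succ m =>
          refine ⟨h.1, ?_⟩
          have := ih h.2 m
          rwa [show min (m+1) (e :: es).length = (min m es.length) + 1 by simp,
            vAt_cons _ _ _ (by omega)]

lemma walk_drop {es : List X.E} {x y : X.V} (h : X.IsWalk es x y) (n : ℕ) (hn : n ≤ es.length) :
    X.IsWalk (es.drop n) (vAt x es n) y := by
  induction es generalizing x n with
  | nil =>
      cases h
      have hn0 : n = 0 := Nat.le_zero.mp hn
      subst hn0; exact rfl
  | cons e es ih =>
      cases n with
      | zero => simpa using h
      | succ m =>
          rw [vAt_cons _ _ _ (by simpa using hn)]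
          exact ih h.2 m (by simpa using hn)

lemma vAt_take (x : X.V) (es : List X.E) {n m : ℕ} (hnm : n ≤ m) (hm : n ≤ es.length) :
    vAt x (es.take m) n = vAt x es n := by
  have h1 : n < (X.walkVerts x (es.take m)).length := by
    simp [List.length_take]; omega
  have h2 : n < (X.walkVerts x es).length := by simp; omega
  simp only [vAt]
  rw [List.getD_eq_getElem _ _ h1, List.getD_eq_getElem _ _ h2]
  simp only [walkVerts_take]
  rw [List.getElem_take]

/-! ### rev walks -/

lemma isWalk_wrev {es : List X.E} {x y : X.V} (h : X.IsWalk es x y) :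
    X.IsWalk (wrev es) y x := by
  induction es generalizing x with
  | nil => cases h; exact rfl
  | cons e es ih =>
      have : wrev (e :: es) = wrev es ++ [X.rev e] := by simp [wrev]
      rw [this]
      refine isWalk_append (ih h.2) ⟨X.rev_o e, ?_⟩
      rw [X.rev_t e, h.1]; exact rfl

@[simp] lemma length_wrev (es : List X.E) : (wrev es).length = es.length := by simp [wrev]

lemma mem_walkVerts_wrev {es : List X.E} {x y : X.V} (h : X.IsWalk es x y) (w : X.V) :
    w ∈ X.walkVerts y (wrev es) ↔ w ∈ X.walkVerts x es := by
  induction es generalizing x with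
  | nil => cases h; simp [wrev]
  | cons e es ih =>
      have hr : wrev (e :: es) = wrev es ++ [X.rev e] := by simp [wrev]
      rw [hr, mem_walkVerts_append (isWalk_wrev h.2)]
      simp only [walkVerts_cons, List.mem_cons, ih h.2, walkVerts_nil,
        List.mem_singleton, X.rev_t, h.1, List.not_mem_nil, or_false]
      constructor
      · rintro (h1 | rfl | rfl)
        · right; exact h1
        · right; exact self_mem_walkVerts _ _
        · left; rfl
      · rintro (rfl | h1)
        · right; right; rfl
        · left; exact h1

/-! ### dist lemmas -/

lemma dist_le {es : List X.E} {x y : X.V} (h : X.IsWalk es x y) :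
    X.dist x y ≤ (es.length : ℕ∞) := sInf_le ⟨es, h, rfl⟩

lemma delDist_le {es : List X.E} {v x y : X.V} (h : X.IsWalk es x y)
    (hv : v ∉ X.walkVerts x es) : X.delDist v x y ≤ (es.length : ℕ∞) :=
  sInf_le ⟨es, h, hv, rfl⟩

@[simp] lemma dist_self (x : X.V) : X.dist x x = 0 :=
  le_antisymm (by simpa using dist_le (isWalk_nil x)) (zero_le)

lemma exists_geodesic {x y : X.V} (h : X.dist x y ≠ ⊤) : ∃ es, X.IsGeodesic es x y := by
  classical
  set S := {n : ℕ∞ | ∃ es, X.IsWalk es x y ∧ (es.length : ℕ∞) = n} with hS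
  have hne : S.Nonempty := by
    by_contra hc
    rw [Set.not_nonempty_iff_eq_empty] at hc
    exact h (by simp [dist, ← hS, hc])
  have : sInf S ∈ S := by
    obtain ⟨n, hn⟩ := hne
    obtain ⟨es, hw, rfl⟩ := hn
    have h2 : ∃ m : ℕ, (m : ℕ∞) ∈ S := ⟨es.length, ⟨es, hw, rfl⟩⟩
    have h3 : sInf S = (sInf {m : ℕ | (m : ℕ∞) ∈ S} : ℕ) := by
      apply le_antisymm
      · exact sInf_le (Nat.sInf_mem h2)
      · apply le_sInf
        rintro n ⟨fs, hfs, rfl⟩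
        exact_mod_cast Nat.cast_le.mpr (Nat.sInf_le (show ((fs.length : ℕ∞) ∈ S) from ⟨fs, hfs, rfl⟩))
    rw [h3]; exact Nat.sInf_mem h2
  obtain ⟨es, hw, hlen⟩ := this
  exact ⟨es, hw, hlen.trans rfl⟩

lemma dist_eq_zero {x y : X.V} (h : X.dist x y = 0) : x = y := by
  obtain ⟨es, hw, hlen⟩ := exists_geodesic (X := X) (x := x) (y := y) (by simp [h])
  rw [h] at hlen
  have : es = [] := by
    cases es with
    | nil => rfl
    | cons e es => simp at hlen
  subst this; exact hw

lemma dist_comm (x y : X.V) : X.dist x y = X.dist y x := by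
  have key : ∀ u v : X.V, X.dist u v ≤ X.dist v u := by
    intro u v
    by_cases h : X.dist v u = ⊤
    · simp [h]
    · obtain ⟨es, hw, hlen⟩ := exists_geodesic h
      calc X.dist u v ≤ ((wrev es).length : ℕ∞) := dist_le (isWalk_wrev hw)
        _ = (es.length : ℕ∞) := by simp
        _ = X.dist v u := hlen
  exact le_antisymm (key x y) (key y x)

lemma dist_triangle (x y z : X.V) : X.dist x z ≤ X.dist x y + X.dist y z := by
  by_cases h1 : X.dist x y = ⊤
  · simp [h1]
  by_cases h2 : X.dist y z = ⊤
  · simp [h2]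
  obtain ⟨es, hw1, hl1⟩ := exists_geodesic h1
  obtain ⟨fs, hw2, hl2⟩ := exists_geodesic h2
  calc X.dist x z ≤ ((es ++ fs).length : ℕ∞) := dist_le (isWalk_append hw1 hw2)
    _ = (es.length : ℕ∞) + fs.length := by push_cast [List.length_append]; ring
    _ = _ := by rw [hl1, hl2]

lemma dist_walk_ne_top {es : List X.E} {x y : X.V} (h : X.IsWalk es x y) :
    X.dist x y ≠ ⊤ :=
  fun hc => by simpa [hc] using dist_le h

/-! ### geodesic splitting -/

lemma geod_split {es fs : List X.E} {x y z : X.V} (h : X.IsGeodesic (es ++ fs) x z)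
    (h1 : X.IsWalk es x y) (h2 : X.IsWalk fs y z) :
    X.IsGeodesic es x y ∧ X.IsGeodesic fs y z := by
  have d1 : X.dist x y ≤ (es.length : ℕ∞) := dist_le h1
  have d2 : X.dist y z ≤ (fs.length : ℕ∞) := dist_le h2
  obtain ⟨n1, hn1⟩ : ∃ n1 : ℕ, X.dist x y = (n1 : ℕ∞) := by
    lift X.dist x y to ℕ using (fun hc => by simp [hc] at d1) with n1
    exact ⟨n1, rfl⟩
  obtain ⟨n2, hn2⟩ : ∃ n2 : ℕ, X.dist y z = (n2 : ℕ∞) := by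
    lift X.dist y z to ℕ using (fun hc => by simp [hc] at d2) with n2
    exact ⟨n2, rfl⟩
  have htri : X.dist x z ≤ X.dist x y + X.dist y z := dist_triangle x y z
  have hlen : ((es.length + fs.length : ℕ) : ℕ∞) = X.dist x z := by
    rw [← h.2]; push_cast [List.length_append]; ring
  have hle1 : n1 ≤ es.length := by exact_mod_cast hn1 ▸ d1
  have hle2 : n2 ≤ fs.length := by exact_mod_cast hn2 ▸ d2
  have hge : (es.length + fs.length : ℕ) ≤ n1 + n2 := by
    have := hlen.symm ▸ htri
    rw [hn1, hn2] at this
    exact_mod_cast this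
  have e1 : n1 = es.length := by omega
  have e2 : n2 = fs.length := by omega
  exact ⟨⟨h1, by rw [hn1, e1]⟩, ⟨h2, by rw [hn2, e2]⟩⟩

lemma geod_dist_vAt {es : List X.E} {x y : X.V} (h : X.IsGeodesic es x y) {i : ℕ}
    (hi : i ≤ es.length) : X.dist x (vAt x es i) = (i : ℕ∞) := by
  have ht := walk_take h.1 i
  rw [min_eq_left hi] at ht
  have hd := walk_drop h.1 i hi
  have := geod_split (es := es.take i) (fs := es.drop i)
    (by rw [List.take_append_drop]; exact h) ht hd
  rw [← this.1.2, List.length_take, min_eq_left hi]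

lemma geod_dist_vAt' {es : List X.E} {x y : X.V} (h : X.IsGeodesic es x y) {i : ℕ}
    (hi : i ≤ es.length) : X.dist (vAt x es i) y = ((es.length - i : ℕ) : ℕ∞) := by
  have ht := walk_take h.1 i
  rw [min_eq_left hi] at ht
  have hd := walk_drop h.1 i hi
  have := geod_split (es := es.take i) (fs := es.drop i)
    (by rw [List.take_append_drop]; exact h) ht hd
  rw [← this.2.2, List.length_drop]

/-- a geodesic slice between positions `n ≤ m` -/
lemma walk_slice {es : List X.E} {x y : X.V} (h : X.IsWalk es x y) {n m : ℕ}
    (hnm : n ≤ m) (hm : m ≤ es.length) :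
    X.IsWalk ((es.take m).drop n) (vAt x es n) (vAt x es m) := by
  have ht := walk_take h m
  rw [min_eq_left hm] at ht
  have := walk_drop ht n (by rw [List.length_take]; omega)
  rwa [vAt_take x es hnm (le_trans hnm hm)] at this

lemma length_slice (es : List X.E) {n m : ℕ} (hm : m ≤ es.length) :
    ((es.take m).drop n).length = m - n := by
  rw [List.length_drop, List.length_take]; omega

lemma vAt_drop (x : X.V) (es : List X.E) {n j : ℕ} (h : n + j ≤ es.length) :
    vAt (vAt x es n) (es.drop n) j = vAt x es (n + j) := by
  induction es generalizing x n with
  | nil =>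
      obtain ⟨hn, hj⟩ : n = 0 ∧ j = 0 := by simpa using h
      subst hn; subst hj; rfl
  | cons e es ih =>
      cases n with
      | zero => simp
      | succ m =>
          simp only [List.length_cons] at h
          have hm : m + j ≤ es.length := by omega
          rw [vAt_cons _ _ _ (by omega), List.drop_succ_cons,
            show m + 1 + j = (m + j) + 1 by omega, vAt_cons _ _ _ (by omega)]
          exact ih _ hm

/-- members of a slice of a geodesic are the `vAt` in the index range -/
lemma mem_slice {es : List X.E} {x y : X.V} (h : X.IsWalk es x y) {n m : ℕ}
    (hnm : n ≤ m) (hm : m ≤ es.length) {w : X.V}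
    (hw : w ∈ X.walkVerts (vAt x es n) ((es.take m).drop n)) :
    ∃ i, n ≤ i ∧ i ≤ m ∧ w = vAt x es i := by
  rw [mem_walkVerts_iff] at hw
  obtain ⟨j, hj, rfl⟩ := hw
  rw [length_slice es hm] at hj
  refine ⟨n + j, by omega, by omega, ?_⟩
  rw [List.drop_take]
  have hjle : j ≤ (es.drop n).length := by rw [List.length_drop]; omega
  rw [vAt_take (vAt x es n) (es.drop n) (show j ≤ m - n from hj) hjle]
  exact vAt_drop x es (show n + j ≤ es.length by omega)

lemma geod_wrev {es : List X.E} {x y : X.V} (h : X.IsGeodesic es x y) :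
    X.IsGeodesic (wrev es) y x :=
  ⟨isWalk_wrev h.1, by rw [length_wrev, h.2, dist_comm]⟩

lemma geod_len_eq {es fs : List X.E} {x y : X.V} (h1 : X.IsGeodesic es x y)
    (h2 : X.IsGeodesic fs x y) : es.length = fs.length := by
  have := h1.2.trans h2.2.symm
  exact_mod_cast this

lemma mem_walkVerts_of_vAt {es : List X.E} {x : X.V} {i : ℕ} (hi : i ≤ es.length) :
    vAt x es i ∈ X.walkVerts x es := (mem_walkVerts_iff _).2 ⟨i, hi, rfl⟩

lemma dist_vAt_vAt {es : List X.E} {x y : X.V} (h : X.IsWalk es x y) {i j : ℕ}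
    (hij : i ≤ j) (hj : j ≤ es.length) :
    X.dist (vAt x es i) (vAt x es j) ≤ ((j - i : ℕ) : ℕ∞) := by
  have := dist_le (walk_slice h hij hj)
  rwa [length_slice es hj] at this

/-- two geodesics from `a` to `x` `2δ`-fellow-travel. -/
lemma fellow {δ : ℕ} (hδ : X.Hyperbolic δ) {g h : List X.E} {a x : X.V}
    (hg : X.IsGeodesic g a x) (hh : X.IsGeodesic h a x) {j : ℕ} (hj : j ≤ g.length) :
    X.dist (vAt a g j) (vAt a h j) ≤ ((2 * δ : ℕ) : ℕ∞) := by
  have hlen : g.length = h.length := geod_len_eq hg hh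
  have hgeo0 : X.IsGeodesic [] x x := ⟨rfl, by simp⟩
  obtain ⟨w, hw, hdw⟩ := hδ a x x g [] h hg hgeo0 hh (vAt a g j)
    (mem_walkVerts_of_vAt hj)
  have hdgj : X.dist a (vAt a g j) = (j : ℕ∞) := geod_dist_vAt hg hj
  rcases hw with hw | hw
  · -- w = x
    simp only [walkVerts_nil, List.mem_singleton] at hw
    rw [hw] at hdw
    have h1 : X.dist (vAt a g j) x = ((g.length - j : ℕ) : ℕ∞) := geod_dist_vAt' hg hj
    have h2 : X.dist (vAt a h j) x = ((h.length - j : ℕ) : ℕ∞) :=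
      geod_dist_vAt' hh (hlen ▸ hj)
    have hle : (g.length - j : ℕ) ≤ δ := by
      rw [h1] at hdw; exact_mod_cast hdw
    calc X.dist (vAt a g j) (vAt a h j)
        ≤ X.dist (vAt a g j) x + X.dist x (vAt a h j) := dist_triangle _ _ _
      _ = ((g.length - j : ℕ) : ℕ∞) + ((h.length - j : ℕ) : ℕ∞) := by
          rw [h1, dist_comm x, h2]
      _ ≤ ((2 * δ : ℕ) : ℕ∞) := by
          rw [← Nat.cast_add, Nat.cast_le]; omega
  · obtain ⟨i, hi, rfl⟩ := (mem_walkVerts_iff _).1 hw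
    have hdai : X.dist a (vAt a h i) = (i : ℕ∞) := geod_dist_vAt hh hi
    have hij1 : (i : ℕ∞) ≤ (j : ℕ∞) + δ := by
      calc (i : ℕ∞) = X.dist a (vAt a h i) := hdai.symm
        _ ≤ X.dist a (vAt a g j) + X.dist (vAt a g j) (vAt a h i) := dist_triangle _ _ _
        _ ≤ (j : ℕ∞) + δ := by rw [hdgj]; exact add_le_add_right hdw _
    have hij2 : (j : ℕ∞) ≤ (i : ℕ∞) + δ := by
      calc (j : ℕ∞) = X.dist a (vAt a g j) := hdgj.symm
        _ ≤ X.dist a (vAt a h i) + X.dist (vAt a h i) (vAt a g j) := dist_triangle _ _ _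
        _ ≤ (i : ℕ∞) + δ := by
            rw [hdai, dist_comm]; exact add_le_add_right hdw _
    have hij1' : i ≤ j + δ := by exact_mod_cast hij1
    have hij2' : j ≤ i + δ := by exact_mod_cast hij2
    have hd2 : X.dist (vAt a h i) (vAt a h j) ≤ (δ : ℕ∞) := by
      rcases le_total i j with hle | hle
      · calc X.dist (vAt a h i) (vAt a h j) ≤ ((j - i : ℕ) : ℕ∞) :=
              dist_vAt_vAt hh.1 hle (hlen ▸ hj)
          _ ≤ (δ : ℕ∞) := by rw [Nat.cast_le]; omega
      · calc X.dist (vAt a h i) (vAt a h j) = X.dist (vAt a h j) (vAt a h i) := dist_comm _ _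
          _ ≤ ((i - j : ℕ) : ℕ∞) := dist_vAt_vAt hh.1 hle hi
          _ ≤ (δ : ℕ∞) := by rw [Nat.cast_le]; omega
    calc X.dist (vAt a g j) (vAt a h j)
        ≤ X.dist (vAt a g j) (vAt a h i) + X.dist (vAt a h i) (vAt a h j) := dist_triangle _ _ _
      _ ≤ (δ : ℕ∞) + (δ : ℕ∞) := add_le_add hdw hd2
      _ = ((2 * δ : ℕ) : ℕ∞) := by push_cast; ring

lemma angleBounded_of_pairs {θ : ℕ∞} :
    ∀ (l : List X.E), (∀ i, (h : i + 1 < l.length) → X.angle l[i] l[i+1] ≤ θ) →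
      X.AngleBounded θ l
  | [], _ => trivial
  | [_], _ => trivial
  | e :: f :: l, h => by
      refine ⟨h 0 (by simp), angleBounded_of_pairs (f :: l) (fun i hi => ?_)⟩
      have := h (i + 1) (by simpa using hi)
      simpa using this

lemma dist_start_mem {es : List X.E} {x y w : X.V} (h : X.IsWalk es x y)
    (hw : w ∈ X.walkVerts x es) : X.dist x w ≤ (es.length : ℕ∞) := by
  obtain ⟨i, hi, rfl⟩ := (mem_walkVerts_iff _).1 hw
  have := dist_vAt_vAt h (Nat.zero_le i) hi
  rw [vAt_zero] at this
  exact this.trans (by rw [Nat.cast_le]; omega)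

lemma dist_lt_top_of_le_cast {u v : X.V} {n : ℕ} (h : X.dist u v ≤ (n : ℕ∞)) :
    X.dist u v ≠ ⊤ := fun hc => by simp [hc] at h

/-- the low highway: a walk from `g(dg)` to `h(ρ)` through points below level `ρ`. -/
lemma highway_low {δ : ℕ} (hδpos : 0 < δ) (hδ : X.Hyperbolic δ) {g h : List X.E} {a x : X.V}
    (hg : X.IsGeodesic g a x) (hh : X.IsGeodesic h a x) {ρ dg : ℕ}
    (hρ1 : 1 ≤ ρ) (hρ : ρ ≤ g.length) (hdg1 : ρ - 1 ≤ dg) (hdg2 : dg ≤ ρ) :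
    ∃ L, X.IsWalk L (vAt a g dg) (vAt a h ρ) ∧ L.length ≤ 22 * δ ∧
      ∀ w ∈ X.walkVerts (vAt a g dg) L,
        X.dist a w < (ρ : ℕ∞) ∨ w = vAt a g dg ∨ w = vAt a h ρ := by
  have hlen : g.length = h.length := geod_len_eq hg hh
  set s := ρ - 10 * δ with hs
  have hsdg : s ≤ dg := by omega
  have hsρ : s ≤ ρ := by omega
  have hdgg : dg ≤ g.length := le_trans hdg2 hρ
  have hρh : ρ ≤ h.length := hlen ▸ hρ
  -- the descending piece
  have hGwalk : X.IsWalk (wrev ((g.take dg).drop s)) (vAt a g dg) (vAt a g s) :=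
    isWalk_wrev (walk_slice hg.1 hsdg hdgg)
  -- the cross piece
  have hC : ∃ C, X.IsWalk C (vAt a g s) (vAt a h s) ∧ C.length ≤ 2 * δ ∧
      ∀ w ∈ X.walkVerts (vAt a g s) C, X.dist a w < (ρ : ℕ∞) := by
    by_cases hcase : ρ ≤ 10 * δ
    · have hs0 : s = 0 := by omega
      rw [hs0]
      refine ⟨[], ?_, by simp, ?_⟩
      · simp only [vAt_zero]; exact isWalk_nil a
      · intro w hw
        simp only [vAt_zero, walkVerts_nil, List.mem_singleton] at hw
        subst hw
        simp only [dist_self]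
        exact_mod_cast Nat.lt_of_lt_of_le Nat.zero_lt_one hρ1
    · have hd : X.dist (vAt a g s) (vAt a h s) ≤ ((2 * δ : ℕ) : ℕ∞) :=
        fellow hδ hg hh (by omega)
      obtain ⟨C, hCw, hClen⟩ := exists_geodesic (dist_lt_top_of_le_cast hd)
      have hClen' : C.length ≤ 2 * δ := by
        rw [← hClen] at hd; exact_mod_cast hd
      refine ⟨C, hCw, hClen', fun w hw => ?_⟩
      have h1 : X.dist (vAt a g s) w ≤ (C.length : ℕ∞) := dist_start_mem hCw hw
      have h2 : X.dist a w ≤ ((s + 2 * δ : ℕ) : ℕ∞) := by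
        calc X.dist a w ≤ X.dist a (vAt a g s) + X.dist (vAt a g s) w := dist_triangle _ _ _
          _ ≤ (s : ℕ∞) + ((2 * δ : ℕ) : ℕ∞) := by
              refine add_le_add (le_of_eq (geod_dist_vAt hg (by omega))) ?_
              exact h1.trans (by rw [Nat.cast_le]; omega)
          _ = ((s + 2 * δ : ℕ) : ℕ∞) := by push_cast; ring
      exact lt_of_le_of_lt h2 (by rw [Nat.cast_lt]; omega)
  obtain ⟨C, hCw, hClen, hCverts⟩ := hC
  have hHwalk : X.IsWalk ((h.take ρ).drop s) (vAt a h s) (vAt a h ρ) :=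
    walk_slice hh.1 hsρ hρh
  refine ⟨wrev ((g.take dg).drop s) ++ (C ++ (h.take ρ).drop s),
    isWalk_append hGwalk (isWalk_append hCw hHwalk), ?_, ?_⟩
  · have l1 : (wrev ((g.take dg).drop s)).length = dg - s := by
      rw [length_wrev, length_slice g hdgg]
    have l3 : ((h.take ρ).drop s).length = ρ - s := by rw [length_slice h hρh]
    simp only [List.length_append, l1, l3]
    omega
  · intro w hw
    rw [mem_walkVerts_append hGwalk, mem_walkVerts_append hCw] at hw
    rcases hw with hw | hw | hw
    · -- on the descending piece
      rw [mem_walkVerts_wrev (walk_slice hg.1 hsdg hdgg)] at hw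
      obtain ⟨i, hi1, hi2, rfl⟩ := mem_slice hg.1 hsdg hdgg hw
      rcases Nat.lt_or_ge i ρ with hiρ | hiρ
      · left; rw [geod_dist_vAt hg (by omega), Nat.cast_lt]; exact hiρ
      · right; left; congr 1; omega
    · exact Or.inl (hCverts w hw)
    · obtain ⟨i, hi1, hi2, rfl⟩ := mem_slice hh.1 hsρ hρh hw
      rcases Nat.lt_or_ge i ρ with hiρ | hiρ
      · left; rw [geod_dist_vAt hh (by omega), Nat.cast_lt]; exact hiρ
      · right; right; congr 1; omega

/-- the high highway: a walk from `g(dg)` to `h(ρ)` through points above level `ρ`. -/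
lemma highway_high {δ : ℕ} (hδpos : 0 < δ) (hδ : X.Hyperbolic δ) {g h : List X.E} {a x : X.V}
    (hg : X.IsGeodesic g a x) (hh : X.IsGeodesic h a x) {ρ dg : ℕ}
    (hρD : ρ < g.length) (hdg1 : ρ ≤ dg) (hdg2 : dg ≤ ρ + 1) :
    ∃ L, X.IsWalk L (vAt a g dg) (vAt a h ρ) ∧ L.length ≤ 22 * δ ∧
      ∀ w ∈ X.walkVerts (vAt a g dg) L,
        (ρ : ℕ∞) < X.dist a w ∨ w = vAt a g dg ∨ w = vAt a h ρ := by
  have hlen : g.length = h.length := geod_len_eq hg hh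
  set u := min (ρ + 10 * δ) g.length with hu
  have hdgu : dg ≤ u := by omega
  have hug : u ≤ g.length := by omega
  have huh : u ≤ h.length := by omega
  have hρu : ρ ≤ u := by omega
  have hGwalk : X.IsWalk ((g.take u).drop dg) (vAt a g dg) (vAt a g u) :=
    walk_slice hg.1 hdgu hug
  have hC : ∃ C, X.IsWalk C (vAt a g u) (vAt a h u) ∧ C.length ≤ 2 * δ ∧
      ∀ w ∈ X.walkVerts (vAt a g u) C, (ρ : ℕ∞) < X.dist a w := by
    by_cases hcase : ρ + 10 * δ ≤ g.length
    · have hu' : u = ρ + 10 * δ := by omega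
      have hd : X.dist (vAt a g u) (vAt a h u) ≤ ((2 * δ : ℕ) : ℕ∞) :=
        fellow hδ hg hh hug
      obtain ⟨C, hCw, hClen⟩ := exists_geodesic (dist_lt_top_of_le_cast hd)
      have hClen' : C.length ≤ 2 * δ := by
        rw [← hClen] at hd; exact_mod_cast hd
      refine ⟨C, hCw, hClen', fun w hw => ?_⟩
      by_contra hcon
      push_neg at hcon
      have h1 : X.dist (vAt a g u) w ≤ (C.length : ℕ∞) := dist_start_mem hCw hw
      have h2 : (u : ℕ∞) ≤ ((ρ + 2 * δ : ℕ) : ℕ∞) := by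
        calc (u : ℕ∞) = X.dist a (vAt a g u) := (geod_dist_vAt hg hug).symm
          _ ≤ X.dist a w + X.dist w (vAt a g u) := dist_triangle _ _ _
          _ ≤ (ρ : ℕ∞) + ((2 * δ : ℕ) : ℕ∞) := by
              refine add_le_add hcon ?_
              rw [dist_comm]
              exact h1.trans (by rw [Nat.cast_le]; omega)
          _ = ((ρ + 2 * δ : ℕ) : ℕ∞) := by push_cast; ring
      have : u ≤ ρ + 2 * δ := by exact_mod_cast h2
      omega
    · have hu' : u = g.length := by omega
      have hgx : vAt a g u = x := by rw [hu']; exact vAt_last hg.1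
      have hhx : vAt a h u = x := by rw [hu', hlen]; exact vAt_last hh.1
      refine ⟨[], by rw [hgx, hhx]; exact isWalk_nil x, by simp, ?_⟩
      intro w hw
      rw [hgx] at hw
      simp only [walkVerts_nil, List.mem_singleton] at hw
      rw [hw, ← hg.2, Nat.cast_lt]
      omega
  obtain ⟨C, hCw, hClen, hCverts⟩ := hC
  have hHwalk : X.IsWalk (wrev ((h.take u).drop ρ)) (vAt a h u) (vAt a h ρ) :=
    isWalk_wrev (walk_slice hh.1 hρu huh)
  refine ⟨(g.take u).drop dg ++ (C ++ wrev ((h.take u).drop ρ)),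
    isWalk_append hGwalk (isWalk_append hCw hHwalk), ?_, ?_⟩
  · have l1 : ((g.take u).drop dg).length = u - dg := by rw [length_slice g hug]
    have l3 : (wrev ((h.take u).drop ρ)).length = u - ρ := by
      rw [length_wrev, length_slice h huh]
    simp only [List.length_append, l1, l3]
    omega
  · intro w hw
    rw [mem_walkVerts_append hGwalk, mem_walkVerts_append hCw] at hw
    rcases hw with hw | hw | hw
    · obtain ⟨i, hi1, hi2, rfl⟩ := mem_slice hg.1 hdgu hug hw
      rcases Nat.lt_or_ge ρ i with hiρ | hiρ
      · left; rw [geod_dist_vAt hg (by omega), Nat.cast_lt]; exact hiρ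
      · right; left; congr 1; omega
    · exact Or.inl (hCverts w hw)
    · rw [mem_walkVerts_wrev (walk_slice hh.1 hρu huh)] at hw
      obtain ⟨i, hi1, hi2, rfl⟩ := mem_slice hh.1 hρu huh hw
      rcases Nat.lt_or_ge ρ i with hiρ | hiρ
      · left; rw [geod_dist_vAt hh (by omega), Nat.cast_lt]; exact hiρ
      · right; right; congr 1; omega

lemma geod_vAt_inj {es : List X.E} {x y : X.V} (h : X.IsGeodesic es x y) {i j : ℕ}
    (hi : i ≤ es.length) (hj : j ≤ es.length) (hij : vAt x es i = vAt x es j) : i = j := by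
  have h1 := geod_dist_vAt h hi
  have h2 := geod_dist_vAt h hj
  rw [hij, h2] at h1
  exact_mod_cast h1.symm

lemma mem_drop_verts {es : List X.E} {x y : X.V} (h : X.IsWalk es x y) {n : ℕ}
    (hn : n ≤ es.length) {w : X.V} (hw : w ∈ X.walkVerts (vAt x es n) (es.drop n)) :
    ∃ i, n ≤ i ∧ i ≤ es.length ∧ w = vAt x es i := by
  have : (es.take es.length).drop n = es.drop n := by rw [List.take_length]
  exact mem_slice h hn le_rfl (by rwa [this])

lemma mem_take_verts {es : List X.E} {x y : X.V} (h : X.IsWalk es x y) {n : ℕ}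
    (hn : n ≤ es.length) {w : X.V} (hw : w ∈ X.walkVerts x (es.take n)) :
    ∃ i, i ≤ n ∧ w = vAt x es i := by
  have h0 : vAt x es 0 = x := vAt_zero x es
  have : w ∈ X.walkVerts (vAt x es 0) ((es.take n).drop 0) := by
    rwa [h0, List.drop_zero]
  obtain ⟨i, _, hi2, rfl⟩ := mem_slice h (Nat.zero_le n) hn this
  exact ⟨i, hi2, rfl⟩

/-- the central bypass lemma: if `c` avoids the endpoints levels appropriately,
two short walks to `g(ρ)` and from `h(ρ)` can be joined avoiding `c`. -/
lemma bypass {δ : ℕ} (hδpos : 0 < δ) (hδ : X.Hyperbolic δ) {g h : List X.E} {a x : X.V}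
    (hg : X.IsGeodesic g a x) (hh : X.IsGeodesic h a x) {ρ : ℕ}
    (hρ1 : 1 ≤ ρ) (hρD : ρ < g.length)
    {p q c : X.V} {P Q : List X.E}
    (hP : X.IsWalk P p (vAt a g ρ)) (hPc : c ∉ X.walkVerts p P) (hPlen : P.length ≤ 2 * δ + 3)
    (hQ : X.IsWalk Q (vAt a h ρ) q) (hQc : c ∉ X.walkVerts (vAt a h ρ) Q)
    (hQlen : Q.length ≤ 2 * δ + 3)
    (hco : c ≠ vAt a g ρ) (hcv : c ≠ vAt a h ρ) :
    X.delDist c p q ≤ ((80 * δ : ℕ) : ℕ∞) := by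
  rcases le_or_gt (ρ : ℕ∞) (X.dist a c) with hm | hm
  · obtain ⟨L, hLw, hLlen, hLverts⟩ :=
      highway_low (dg := ρ) hδpos hδ hg hh hρ1 (le_of_lt hρD) (by omega) le_rfl
    have hwalk : X.IsWalk (P ++ (L ++ Q)) p q :=
      isWalk_append hP (isWalk_append hLw hQ)
    have hnc : c ∉ X.walkVerts p (P ++ (L ++ Q)) := by
      rw [mem_walkVerts_append hP, mem_walkVerts_append hLw]
      rintro (hc | hc | hc)
      · exact hPc hc
      · rcases hLverts c hc with h1 | h1 | h1
        · exact absurd hm (not_le.mpr h1)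
        · exact hco h1
        · exact hcv h1
      · exact hQc hc
    calc X.delDist c p q ≤ (((P ++ (L ++ Q)).length : ℕ) : ℕ∞) := delDist_le hwalk hnc
      _ ≤ ((80 * δ : ℕ) : ℕ∞) := by
          rw [Nat.cast_le]
          simp only [List.length_append]
          omega
  · obtain ⟨L, hLw, hLlen, hLverts⟩ :=
      highway_high (dg := ρ) hδpos hδ hg hh hρD le_rfl (by omega)
    have hwalk : X.IsWalk (P ++ (L ++ Q)) p q :=
      isWalk_append hP (isWalk_append hLw hQ)
    have hnc : c ∉ X.walkVerts p (P ++ (L ++ Q)) := by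
      rw [mem_walkVerts_append hP, mem_walkVerts_append hLw]
      rintro (hc | hc | hc)
      · exact hPc hc
      · rcases hLverts c hc with h1 | h1 | h1
        · exact absurd hm (not_lt.mpr (le_of_lt h1))
        · exact hco h1
        · exact hcv h1
      · exact hQc hc
    calc X.delDist c p q ≤ (((P ++ (L ++ Q)).length : ℕ) : ℕ∞) := delDist_le hwalk hnc
      _ ≤ ((80 * δ : ℕ) : ℕ∞) := by
          rw [Nat.cast_le]
          simp only [List.length_append]
          omega

/-- the interior angles of the short geodesic `σ` are bounded. -/
lemma interior_angle {δ : ℕ} (hδpos : 0 < δ) (hδ : X.Hyperbolic δ) {g h : List X.E} {a x : X.V}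
    (hg : X.IsGeodesic g a x) (hh : X.IsGeodesic h a x) {ρ : ℕ}
    (hρ1 : 1 ≤ ρ) (hρD : ρ < g.length) {b₀ v : X.V} {σ stub : List X.E}
    (hσ : X.IsGeodesic σ b₀ v) (hσlen : σ.length ≤ 2 * δ + 2) (hv : v = vAt a h ρ)
    (hstub : X.IsWalk stub b₀ (vAt a g ρ)) (hstublen : stub.length ≤ 1)
    (hstubverts : ∀ w ∈ X.walkVerts b₀ stub, w = b₀ ∨ w ∉ X.walkVerts b₀ σ)
    (hoeσ : ∀ j, 1 ≤ j → j ≤ σ.length → vAt b₀ σ j ≠ vAt a g ρ)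
    {i : ℕ} (hi : i + 1 < σ.length) :
    X.angle (σ[i]'(by omega)) (σ[i+1]'(hi)) ≤ ((80 * δ : ℕ) : ℕ∞) := by
  set c := vAt b₀ σ (i + 1) with hc
  have hcmem : c ∈ X.walkVerts b₀ σ := mem_walkVerts_of_vAt (by omega)
  -- the walk P
  have htake := walk_take hσ.1 i
  rw [min_eq_left (by omega : i ≤ σ.length)] at htake
  have hPwalk : X.IsWalk (wrev (σ.take i) ++ stub) (vAt b₀ σ i) (vAt a g ρ) :=
    isWalk_append (isWalk_wrev htake) hstub
  have hPc : c ∉ X.walkVerts (vAt b₀ σ i) (wrev (σ.take i) ++ stub) := by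
    rw [mem_walkVerts_append (isWalk_wrev htake)]
    rintro (h1 | h1)
    · rw [mem_walkVerts_wrev htake] at h1
      obtain ⟨j, hj, hjc⟩ := mem_take_verts hσ.1 (by omega) h1
      have := geod_vAt_inj hσ (by omega) (by omega) hjc.symm
      omega
    · rcases hstubverts c h1 with h2 | h2
      · have h0 : vAt b₀ σ 0 = vAt b₀ σ (i + 1) := by rw [vAt_zero]; exact h2.symm
        have := geod_vAt_inj hσ (by omega) (by omega) h0
        omega
      · exact h2 hcmem
  -- the walk Q
  have hdrop := walk_drop hσ.1 (i + 2) (by omega)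
  have hQwalk : X.IsWalk (wrev (σ.drop (i + 2))) v (vAt b₀ σ (i + 2)) := isWalk_wrev hdrop
  have hQc : c ∉ X.walkVerts v (wrev (σ.drop (i + 2))) := by
    rw [mem_walkVerts_wrev hdrop]
    intro h1
    obtain ⟨j, hj1, hj2, hjc⟩ := mem_drop_verts hσ.1 (by omega) h1
    have := geod_vAt_inj hσ (by omega) (by omega) hjc.symm
    omega
  have hco : c ≠ vAt a g ρ := hoeσ (i + 1) (by omega) (by omega)
  have hcv : c ≠ vAt a h ρ := by
    rw [← hv]
    intro hcon
    have hveq : v = vAt b₀ σ σ.length := (vAt_last hσ.1).symm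
    rw [hveq] at hcon
    have := geod_vAt_inj hσ (by omega) le_rfl hcon
    omega
  have hby := bypass hδpos hδ hg hh hρ1 hρD hPwalk hPc
    (by rw [List.length_append, length_wrev, List.length_take]; omega)
    (hv ▸ hQwalk) (hv ▸ hQc)
    (by rw [length_wrev, List.length_drop]; omega) hco hcv
  have ho : X.o (σ[i]'(by omega)) = vAt b₀ σ i := walk_getElem_o hσ.1 (by omega)
  have ht1 : X.t (σ[i]'(by omega)) = vAt b₀ σ (i + 1) := walk_getElem_t hσ.1 (by omega)
  have ht2 : X.t (σ[i+1]'hi) = vAt b₀ σ (i + 2) := walk_getElem_t hσ.1 hi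
  show X.delDist _ _ _ ≤ _
  rw [ho, ht1, ht2]
  exact hby

lemma cone_main {δ : ℕ} (hδpos : 0 < δ) (hδ : X.Hyperbolic δ) {g h : List X.E} {a x : X.V}
    {e : X.E} {v : X.V}
    (hg : X.IsGeodesic g a x) (hh : X.IsGeodesic h a x) {ρ dte : ℕ}
    (hρg : ρ ≤ g.length)
    (hoe : X.o e = vAt a g ρ) (hte : X.t e = vAt a g dte)
    (hdte : (dte = ρ - 1 ∧ 1 ≤ ρ) ∨ dte = ρ + 1) (hteg : dte ≤ g.length)
    (hv : v = vAt a h ρ) :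
    X.InConeV ((80 * δ : ℕ) : ℕ∞) e v := by
  have hlen : g.length = h.length := geod_len_eq hg hh
  have hρh : ρ ≤ h.length := hlen ▸ hρg
  by_cases hvo : v = X.o e ∨ v = X.t e
  · -- trivial: the walk [e]
    refine ⟨[], X.t e, ⟨rfl, rfl⟩, ?_, trivial, ?_⟩
    · show ((1 : ℕ) : ℕ∞) ≤ ((80 * δ : ℕ) : ℕ∞)
      rw [Nat.cast_le]; omega
    · rcases hvo with hv1 | hv1 <;> rw [hv1] <;> simp [walkVerts]
  push_neg at hvo
  obtain ⟨hvoe, hvte⟩ := hvo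
  have hρ1 : 1 ≤ ρ := by
    by_contra hcon
    have hρ0 : ρ = 0 := by omega
    apply hvoe
    rw [hv, hoe, hρ0, vAt_zero, vAt_zero]
  have hρD : ρ < g.length := by
    rcases Nat.lt_or_ge ρ g.length with h1 | h1
    · exact h1
    · exfalso
      have hρeq : ρ = g.length := by omega
      apply hvoe
      rw [hv, hoe, hρeq, vAt_last hg.1, hlen, vAt_last hh.1]
  have hone : X.o e ≠ X.t e := by
    rw [hoe, hte]
    intro hcon
    have := geod_vAt_inj hg hρg hteg hcon
    omega
  have hwrev : X.IsWalk [X.rev e] (X.t e) (X.o e) := by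
    refine ⟨X.rev_o e, ?_⟩
    show X.t (X.rev e) = X.o e
    exact X.rev_t e
  have hdov : X.dist (X.o e) v ≤ ((2 * δ : ℕ) : ℕ∞) := by
    rw [hoe, hv]; exact fellow hδ hg hh hρg
  have hdtv : X.dist (X.t e) v ≤ ((2 * δ + 1 : ℕ) : ℕ∞) := by
    calc X.dist (X.t e) v ≤ X.dist (X.t e) (X.o e) + X.dist (X.o e) v := dist_triangle _ _ _
      _ ≤ ((1 : ℕ) : ℕ∞) + ((2 * δ : ℕ) : ℕ∞) := by
          refine add_le_add ?_ hdov
          simpa using dist_le hwrev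
      _ = ((2 * δ + 1 : ℕ) : ℕ∞) := by push_cast; ring
  obtain ⟨τ, hτ⟩ := exists_geodesic (dist_lt_top_of_le_cast hdtv)
  have hτlen : τ.length ≤ 2 * δ + 1 := by
    have := hτ.2.symm ▸ hdtv
    exact_mod_cast this
  have hdov' : X.dist a (X.o e) = (ρ : ℕ∞) := by rw [hoe]; exact geod_dist_vAt hg hρg
  by_cases hoem : X.o e ∈ X.walkVerts (X.t e) τ
  · -- W₂ = e :: rev e :: σ
    obtain ⟨i0, hi0le, hi0⟩ := (mem_walkVerts_iff _).1 hoem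
    have hi0pos : 1 ≤ i0 := by
      rcases Nat.eq_zero_or_pos i0 with h1 | h1
      · exfalso; apply hone; rw [hi0, h1, vAt_zero]
      · exact h1
    have hi0lt : i0 < τ.length := by
      rcases Nat.lt_or_ge i0 τ.length with h1 | h1
      · exact h1
      · exfalso
        have : i0 = τ.length := by omega
        apply hvoe
        rw [hi0, this, vAt_last hτ.1]
    have htake := walk_take hτ.1 i0
    rw [min_eq_left hi0le] at htake
    have hdrop := walk_drop hτ.1 i0 hi0le
    have hsplit := geod_split (es := τ.take i0) (fs := τ.drop i0)
      (by rw [List.take_append_drop]; exact hτ) htake hdrop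
    set σ := τ.drop i0 with hσdef
    have hσ : X.IsGeodesic σ (X.o e) v := by rw [hi0]; exact hsplit.2
    have hσlen : σ.length ≤ 2 * δ + 1 := by
      rw [hσdef, List.length_drop]; omega
    have hσpos : 1 ≤ σ.length := by rw [hσdef, List.length_drop]; omega
    have hteσ : X.t e ∉ X.walkVerts (X.o e) σ := by
      intro hmem
      rw [hi0] at hmem
      obtain ⟨j, hj1, hj2, hjc⟩ := mem_drop_verts hτ.1 hi0le hmem
      have h0 : vAt (X.t e) τ 0 = vAt (X.t e) τ j := by rw [vAt_zero]; exact hjc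
      have := geod_vAt_inj hτ (by omega) hj2 h0
      omega
    have hwalk : X.IsWalk (e :: X.rev e :: σ) (X.o e) v := by
      refine ⟨rfl, X.rev_o e, ?_⟩
      rw [X.rev_t e]
      exact hσ.1
    refine ⟨X.rev e :: σ, v, hwalk, ?_, ?_, end_mem_walkVerts hwalk⟩
    · show (((σ.length + 2 : ℕ)) : ℕ∞) ≤ ((80 * δ : ℕ) : ℕ∞)
      rw [Nat.cast_le]; omega
    · apply angleBounded_of_pairs
      intro i hi
      match i, hi with
      | 0, _ =>
          show X.angle e (X.rev e) ≤ _
          show X.delDist (X.t e) (X.o e) (X.t (X.rev e)) ≤ _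
          rw [X.rev_t e]
          have h0 : X.delDist (X.t e) (X.o e) (X.o e) ≤ ((0 : ℕ) : ℕ∞) := by
            refine delDist_le (isWalk_nil (X.o e)) ?_
            simp only [walkVerts_nil, List.mem_singleton]
            exact fun hcon => hone hcon.symm
          exact h0.trans (by rw [Nat.cast_le]; omega)
      | 1, hb =>
          have hσ0 : 0 < σ.length := hσpos
          show X.angle (X.rev e) (σ[0]'(hσ0)) ≤ _
          show X.delDist (X.t (X.rev e)) (X.o (X.rev e)) (X.t (σ[0]'hσ0)) ≤ _
          rw [X.rev_t e, X.rev_o e, walk_getElem_t hσ.1 hσ0]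
          -- bypass from t e to vAt (o e) σ 1 avoiding o e, via a highway from t e to v
          have hQdrop := walk_drop hσ.1 1 hσpos
          have hQwalk : X.IsWalk (wrev (σ.drop 1)) v (vAt (X.o e) σ 1) := isWalk_wrev hQdrop
          have hQc : X.o e ∉ X.walkVerts v (wrev (σ.drop 1)) := by
            rw [mem_walkVerts_wrev hQdrop]
            intro hmem
            obtain ⟨j, hj1, hj2, hjc⟩ := mem_drop_verts hσ.1 hσpos hmem
            have h0 : vAt (X.o e) σ 0 = vAt (X.o e) σ j := by rw [vAt_zero]; exact hjc
            have := geod_vAt_inj hσ (by omega) hj2 h0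
            omega
          have hL : ∃ L, X.IsWalk L (X.t e) v ∧ L.length ≤ 22 * δ ∧
              X.o e ∉ X.walkVerts (X.t e) L := by
            rcases hdte with ⟨hd, _⟩ | hd
            · obtain ⟨L, hLw, hLlen, hLverts⟩ :=
                highway_low (dg := dte) hδpos hδ hg hh hρ1 (le_of_lt hρD)
                  (by omega) (by omega)
              rw [← hte, ← hv] at hLw hLverts
              refine ⟨L, hLw, hLlen, fun hmem => ?_⟩
              rcases hLverts _ hmem with h1 | h1 | h1
              · rw [hdov'] at h1; exact lt_irrefl _ h1
              · exact hone h1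
              · exact hvoe h1.symm
            · obtain ⟨L, hLw, hLlen, hLverts⟩ :=
                highway_high (dg := dte) hδpos hδ hg hh hρD (by omega) (by omega)
              rw [← hte, ← hv] at hLw hLverts
              refine ⟨L, hLw, hLlen, fun hmem => ?_⟩
              rcases hLverts _ hmem with h1 | h1 | h1
              · rw [hdov'] at h1; exact lt_irrefl _ h1
              · exact hone h1
              · exact hvoe h1.symm
          obtain ⟨L, hLw, hLlen, hLc⟩ := hL
          have hBwalk : X.IsWalk (L ++ wrev (σ.drop 1)) (X.t e) (vAt (X.o e) σ 1) :=
            isWalk_append hLw hQwalk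
          have hBc : X.o e ∉ X.walkVerts (X.t e) (L ++ wrev (σ.drop 1)) := by
            rw [mem_walkVerts_append hLw]
            rintro (h1 | h1)
            · exact hLc h1
            · exact hQc h1
          calc X.delDist (X.o e) (X.t e) (vAt (X.o e) σ 1)
              ≤ (((L ++ wrev (σ.drop 1)).length : ℕ) : ℕ∞) := delDist_le hBwalk hBc
            _ ≤ ((80 * δ : ℕ) : ℕ∞) := by
                rw [Nat.cast_le, List.length_append, length_wrev, List.length_drop]
                omega
      | (j + 2), hb =>
          have hj : j + 1 < σ.length := by simp only [List.length_cons] at hb; omega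
          show X.angle (σ[j]'(by omega)) (σ[j+1]'hj) ≤ _
          refine interior_angle hδpos hδ hg hh hρ1 hρD hσ (by omega) hv
            (show X.IsWalk [] (X.o e) (vAt a g ρ) from hoe) (by simp) ?_ ?_ hj
          · intro w hw
            left
            simpa using hw
          · intro k hk1 hk2 hcon
            rw [← hoe] at hcon
            have h0 : vAt (X.o e) σ k = vAt (X.o e) σ 0 := by rw [vAt_zero]; exact hcon
            have := geod_vAt_inj hσ hk2 (by omega) h0
            omega
  · -- W₁ = e :: τ
    have hσ : X.IsGeodesic τ (X.t e) v := hτ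
    have hσpos : 1 ≤ τ.length := by
      cases hτne : τ with
      | nil =>
          exfalso
          apply hvte
          rw [hτne] at hσ
          exact hσ.1.symm
      | cons f fs => simp
    have hwalk : X.IsWalk (e :: τ) (X.o e) v := ⟨rfl, hσ.1⟩
    refine ⟨τ, v, hwalk, ?_, ?_, end_mem_walkVerts hwalk⟩
    · show (((τ.length + 1 : ℕ)) : ℕ∞) ≤ ((80 * δ : ℕ) : ℕ∞)
      rw [Nat.cast_le]; omega
    · apply angleBounded_of_pairs
      intro i hi
      match i, hi with
      | 0, _ =>
          have hσ0 : 0 < τ.length := hσpos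
          show X.angle e (τ[0]'hσ0) ≤ _
          show X.delDist (X.t e) (X.o e) (X.t (τ[0]'hσ0)) ≤ _
          rw [walk_getElem_t hσ.1 hσ0]
          have hQdrop := walk_drop hσ.1 1 hσpos
          have hQwalk : X.IsWalk (wrev (τ.drop 1)) v (vAt (X.t e) τ 1) := isWalk_wrev hQdrop
          have hQc : X.t e ∉ X.walkVerts v (wrev (τ.drop 1)) := by
            rw [mem_walkVerts_wrev hQdrop]
            intro hmem
            obtain ⟨j, hj1, hj2, hjc⟩ := mem_drop_verts hσ.1 hσpos hmem
            have h0 : vAt (X.t e) τ 0 = vAt (X.t e) τ j := by rw [vAt_zero]; exact hjc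
            have := geod_vAt_inj hσ (by omega) hj2 h0
            omega
          have hres := bypass hδpos hδ hg hh hρ1 hρD
            (P := []) (p := X.o e) (show X.IsWalk [] (X.o e) (vAt a g ρ) from hoe)
            (by simp only [walkVerts_nil, List.mem_singleton]
                exact fun hcon => hone hcon.symm)
            (by simp)
            (hv ▸ hQwalk) (hv ▸ hQc)
            (by rw [length_wrev, List.length_drop]; omega)
            (by rw [← hoe]; exact fun hcon => hone hcon.symm)
            (by rw [← hv]; exact fun hcon => hvte hcon.symm)
          exact hres
      | (j + 1), hb =>
          have hj : j + 1 < τ.length := by simp only [List.length_cons] at hb; omega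
          show X.angle (τ[j]'(by omega)) (τ[j+1]'hj) ≤ _
          refine interior_angle hδpos hδ hg hh hρ1 hρD hσ (by omega) hv
            (show X.IsWalk [X.rev e] (X.t e) (vAt a g ρ) from by rw [← hoe]; exact hwrev)
            (by simp) ?_ ?_ hj
          · intro w hw
            simp only [walkVerts_cons, walkVerts_nil, X.rev_t, List.mem_cons,
              List.mem_singleton, List.not_mem_nil, or_false] at hw
            rcases hw with hw1 | hw1
            · left; exact hw1
            · right; rw [hw1]; exact hoem
          · intro k hk1 hk2 hcon
            rw [← hoe] at hcon
            apply hoem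
            rw [← hcon]
            exact mem_walkVerts_of_vAt hk2

theorem stmt_9_aux (X : MGraph) (δ : ℕ) (hδpos : 0 < δ) (hδ : X.Hyperbolic δ)
    (a x : X.V) (hconn : X.dist a x ≠ ⊤) :
    (∀ (es : List X.E) (v : X.V),
        ((X.IsGeodesic es a x ∧ v ∈ X.walkVerts a es) ∨
         (X.IsGeodesic es x a ∧ v ∈ X.walkVerts x es)) →
        v ∈ X.ConicalSet (2 * δ) a x) ∧
    (∀ ρ : ℕ, (ρ : ℕ∞) ≤ X.dist a x →
        ∃ t ∈ X.ConicalSet (2 * δ) a x, X.dist a t = (ρ : ℕ∞)) := by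
  have hcast : ((40 * (2 * δ) : ℕ) : ℕ∞) = ((80 * δ : ℕ) : ℕ∞) := by congr 1; ring
  have part1 : ∀ (es : List X.E) (v : X.V),
      ((X.IsGeodesic es a x ∧ v ∈ X.walkVerts a es) ∨
       (X.IsGeodesic es x a ∧ v ∈ X.walkVerts x es)) →
      v ∈ X.ConicalSet (2 * δ) a x := by
    intro es v hes
    obtain ⟨gh, hgh, hvmem⟩ : ∃ gh : List X.E, X.IsGeodesic gh a x ∧ v ∈ X.walkVerts a gh := by
      rcases hes with ⟨h1, h2⟩ | ⟨h1, h2⟩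
      · exact ⟨es, h1, h2⟩
      · exact ⟨wrev es, geod_wrev h1, (mem_walkVerts_wrev h1.1 v).2 h2⟩
    obtain ⟨ρ, hρle, hvat⟩ := (mem_walkVerts_iff v).1 hvmem
    have hdav : X.dist a v = (ρ : ℕ∞) := by rw [hvat]; exact geod_dist_vAt hgh hρle
    have hdva : X.dist v a = (ρ : ℕ∞) := by rw [dist_comm]; exact hdav
    have hdvx : X.dist v x = ((gh.length - ρ : ℕ) : ℕ∞) := by
      rw [hvat]; exact geod_dist_vAt' hgh hρle
    have hdxv : X.dist x v = ((gh.length - ρ : ℕ) : ℕ∞) := by rw [dist_comm]; exact hdvx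
    have hdxa : X.dist x a = (gh.length : ℕ∞) := by rw [dist_comm, ← hgh.2]
    refine ⟨?_, ?_, ?_⟩
    · -- OnAlphaGeod
      show X.dist x v + X.dist v a ≤ X.dist x a + _
      rw [hdxv, hdva, hdxa]
      calc ((gh.length - ρ : ℕ) : ℕ∞) + (ρ : ℕ∞) = ((gh.length : ℕ) : ℕ∞) := by
            rw [← Nat.cast_add]; congr 1; omega
        _ ≤ (gh.length : ℕ∞) + ((2 * δ : ℕ) : ℕ∞) := le_self_add
    · show X.dist a v ≤ X.dist a x
      rw [hdav, ← hgh.2, Nat.cast_le]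
      exact hρle
    · intro e he
      obtain ⟨hdoe, es', hdir, hemem⟩ := he
      rw [hdav] at hdoe
      rw [hcast]
      rcases hdir with hdir | hdir
      · -- es' : a → x
        obtain ⟨i, hilt, hie⟩ := List.getElem_of_mem hemem
        have hoe : X.o e = vAt a es' i := by rw [← hie]; exact walk_getElem_o hdir.1 hilt
        have hte : X.t e = vAt a es' (i + 1) := by
          rw [← hie]; exact walk_getElem_t hdir.1 hilt
        have hiρ : i = ρ := by
          have : X.dist a (X.o e) = (i : ℕ∞) := by
            rw [hoe]; exact geod_dist_vAt hdir (by omega)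
          rw [this] at hdoe
          exact_mod_cast hdoe
        subst hiρ
        exact cone_main hδpos hδ hdir hgh (by omega) hoe hte (Or.inr rfl) (by omega) hvat
      · -- es' : x → a
        have hgw : X.IsGeodesic (wrev es') a x := geod_wrev hdir
        have hrevmem : X.rev e ∈ wrev es' := by
          rw [wrev, List.mem_reverse]
          exact List.mem_map_of_mem (f := X.rev) hemem
        obtain ⟨i, hilt, hie⟩ := List.getElem_of_mem hrevmem
        have hte : X.t e = vAt a (wrev es') i := by
          rw [← X.rev_o e, ← hie]; exact walk_getElem_o hgw.1 hilt
        have hoe : X.o e = vAt a (wrev es') (i + 1) := by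
          rw [← X.rev_t e, ← hie]; exact walk_getElem_t hgw.1 hilt
        have hiρ : i + 1 = ρ := by
          have : X.dist a (X.o e) = ((i + 1 : ℕ) : ℕ∞) := by
            rw [hoe]; exact geod_dist_vAt hgw (by omega)
          rw [this] at hdoe
          exact_mod_cast hdoe
        have hρ1 : 1 ≤ ρ := by omega
        have hoe' : X.o e = vAt a (wrev es') ρ := by rw [hoe]; congr 1
        have hte' : X.t e = vAt a (wrev es') (ρ - 1) := by
          rw [hte]; congr 1; omega
        exact cone_main hδpos hδ hgw hgh (by omega) hoe' hte' (Or.inl ⟨rfl, hρ1⟩)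
          (by omega) hvat
  refine ⟨part1, ?_⟩
  intro ρ hρ
  obtain ⟨gh, hgh⟩ := exists_geodesic hconn
  have hρle : ρ ≤ gh.length := by
    rw [← hgh.2, Nat.cast_le] at hρ
    exact hρ
  refine ⟨vAt a gh ρ, part1 gh (vAt a gh ρ) (Or.inl ⟨hgh, mem_walkVerts_of_vAt hρle⟩), ?_⟩
  exact geod_dist_vAt hgh hρle


end MGraph

/-- every vertex on a geodesic between `a` and `x` belongs to
`U_{2δ}[a,x]`; in particular each slice at distance `ρ ≤ d(a,x)` from `a` is
non-empty. -/
theorem stmt_9 (X : MGraph) (δ : ℕ) (hδpos : 0 < δ) (hδ : X.Hyperbolic δ)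
    (a x : X.V) (hconn : X.dist a x ≠ ⊤) :
    (∀ (es : List X.E) (v : X.V),
        ((X.IsGeodesic es a x ∧ v ∈ X.walkVerts a es) ∨
         (X.IsGeodesic es x a ∧ v ∈ X.walkVerts x es)) →
        v ∈ X.ConicalSet (2 * δ) a x) ∧
    (∀ ρ : ℕ, (ρ : ℕ∞) ≤ X.dist a x →
        ∃ t ∈ X.ConicalSet (2 * δ) a x, X.dist a t = (ρ : ℕ∞)) :=
  MGraph.stmt_9_aux X δ hδpos hδ a x hconn
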